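/- Fix W > 0, ν ≥ 0 and λ ∈ (0,1), and set λ̄ = 1 − λ. Then as t → ∞, the ratio [ log₂(1 + t) + min{ W·log₂(1 + λ·t^ν/W) , log₂(1 + λ̄·t) } ] / log₂(1 + t) converges to min{2, 1 + W·ν}. -/

import Mathlib

open Filter

private lemma aux_log_ratio (a c : ℝ) (ha : 0 ≤ a) (hc : 0 < c) :
    Tendsto (fun t : ℝ => Real.log (1 + c * t ^ a) / Real.log (1 + t)) atTop (nhds a) := by
  have hlog : Tendsto (fun t : ℝ => Real.log t) atTop atTop := Real.tendsto_log_atTop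
  -- v → 0
  have hv : Tendsto (fun t : ℝ => Real.log (1 / t + 1) / Real.log t) atTop (nhds 0) := by
    have h1 : Tendsto (fun t : ℝ => 1 / t + 1) atTop (nhds (0 + 1)) := by
      simpa [one_div] using tendsto_inv_atTop_zero.add (tendsto_const_nhds (α := ℝ) (x := 1))
    have h2 : Tendsto (fun t : ℝ => Real.log (1 / t + 1)) atTop (nhds 0) := by
      have := (Real.continuousAt_log (by norm_num : (0:ℝ) + 1 ≠ 0)).tendsto.comp h1
      simp only [Function.comp_def, zero_add, Real.log_one] at this; exact this
    exact h2.div_atTop hlog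
  -- u → 0
  have hu : Tendsto (fun t : ℝ => Real.log (t ^ (-a) + c) / Real.log t) atTop (nhds 0) := by
    rcases ha.eq_or_lt with h0 | h0
    · have : (fun t : ℝ => Real.log (t ^ (-a) + c) / Real.log t)
          = fun t : ℝ => Real.log (1 + c) / Real.log t := by
        funext t; rw [← h0]; norm_num
      rw [this]
      exact tendsto_const_nhds.div_atTop hlog
    · have h1 : Tendsto (fun t : ℝ => t ^ (-a) + c) atTop (nhds (0 + c)) :=
        (tendsto_rpow_neg_atTop h0).add tendsto_const_nhds
      have h2 : Tendsto (fun t : ℝ => Real.log (t ^ (-a) + c)) atTop (nhds (Real.log (0 + c))) :=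
        (Real.continuousAt_log (by positivity)).tendsto.comp h1
      exact h2.div_atTop hlog
  have key : ∀ᶠ t in atTop, (a + Real.log (t ^ (-a) + c) / Real.log t) /
      (1 + Real.log (1 / t + 1) / Real.log t)
      = Real.log (1 + c * t ^ a) / Real.log (1 + t) := by
    filter_upwards [eventually_gt_atTop 1] with t ht
    have ht0 : 0 < t := by linarith
    have hlt : 0 < Real.log t := Real.log_pos ht
    have hpa : 0 < t ^ a := Real.rpow_pos_of_pos ht0 a
    have hpna : 0 < t ^ (-a) := Real.rpow_pos_of_pos ht0 (-a)
    have hV : 0 < Real.log (1 / t + 1) := Real.log_pos (by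
      have : 0 < 1 / t := by positivity
      linarith)
    have e1 : 1 + c * t ^ a = t ^ a * (t ^ (-a) + c) := by
      rw [mul_add, ← Real.rpow_add ht0, add_neg_cancel, Real.rpow_zero]; ring
    have e2 : (1 + t) = t * (1 / t + 1) := by field_simp
    rw [e1, e2, Real.log_mul hpa.ne' (by positivity), Real.log_mul ht0.ne' (by positivity),
      Real.log_rpow ht0, div_eq_div_iff (by positivity) (by positivity)]
    field_simp
    try ring
  have hfin : Tendsto (fun t : ℝ => (a + Real.log (t ^ (-a) + c) / Real.log t) /
      (1 + Real.log (1 / t + 1) / Real.log t)) atTop (nhds a) := by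
    have := ((tendsto_const_nhds (x := a)).add hu).div ((tendsto_const_nhds (x := (1:ℝ))).add hv)
      (show (1:ℝ) + 0 ≠ 0 by norm_num)
    simp only [add_zero, div_one] at this; exact this
  exact hfin.congr' key

/-- Asymptotic multiplexing gain of decode-and-cancel: with `SNR = t`,
`SNR_side = t^ν`, the normalized sum-rate
`(log₂(1+t) + min{W·log₂(1 + λ·t^ν/W), log₂(1 + λ̄·t)}) / log₂(1+t)` converges to
`min{2, 1 + Wν}`. -/
theorem dc_mux_gain (ν W lam : ℝ)
    (hW : 0 < W) (hν : 0 ≤ ν) (hlam0 : 0 < lam) (hlam1 : lam < 1) :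
    Tendsto
      (fun t : ℝ =>
        (Real.logb 2 (1 + t) +
            min (W * Real.logb 2 (1 + lam * t ^ ν / W))
              (Real.logb 2 (1 + (1 - lam) * t))) /
          Real.logb 2 (1 + t))
      atTop (nhds (min 2 (1 + W * ν))) := by
  have h1 : Tendsto (fun t : ℝ => Real.log (1 + (lam / W) * t ^ ν) / Real.log (1 + t))
      atTop (nhds ν) := aux_log_ratio ν (lam / W) hν (div_pos hlam0 hW)
  have h2 : Tendsto (fun t : ℝ => Real.log (1 + (1 - lam) * t) / Real.log (1 + t))
      atTop (nhds 1) := by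
    have := aux_log_ratio 1 (1 - lam) zero_le_one (by linarith)
    refine this.congr' ?_
    filter_upwards [eventually_gt_atTop 0] with t ht
    rw [Real.rpow_one]
  have hlim : Tendsto (fun t : ℝ =>
      1 + min (W * (Real.log (1 + lam * t ^ ν / W) / Real.log (1 + t)))
        (Real.log (1 + (1 - lam) * t) / Real.log (1 + t)))
      atTop (nhds (1 + min (W * ν) 1)) := by
    have h1' : Tendsto (fun t : ℝ => W * (Real.log (1 + lam * t ^ ν / W) / Real.log (1 + t)))
        atTop (nhds (W * ν)) := by
      have : (fun t : ℝ => W * (Real.log (1 + lam * t ^ ν / W) / Real.log (1 + t)))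
          = fun t : ℝ => W * (Real.log (1 + (lam / W) * t ^ ν) / Real.log (1 + t)) := by
        funext t; ring_nf
      rw [this]
      exact h1.const_mul W
    exact tendsto_const_nhds.add (h1'.min h2)
  have hmin : min 2 (1 + W * ν) = 1 + min (W * ν) 1 := by
    rcases le_total (W * ν) 1 with h | h
    · rw [min_eq_right (by linarith), min_eq_left h]
    · rw [min_eq_left (by linarith), min_eq_right h]; norm_num
  rw [hmin]
  refine hlim.congr' ?_
  filter_upwards [eventually_gt_atTop 1] with t ht
  have ht0 : 0 < t := by linarith
  have hl : 0 < Real.log (1 + t) := Real.log_pos (by linarith)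
  have hlog2 : 0 < Real.log 2 := Real.log_pos (by norm_num)
  simp only [Real.logb]
  rcases le_total (W * Real.log (1 + lam * t ^ ν / W)) (Real.log (1 + (1 - lam) * t)) with h | h
  · rw [min_eq_left (by rw [← mul_div_assoc]; exact (div_le_div_iff_of_pos_right hl).mpr h),
      min_eq_left (by rw [← mul_div_assoc]; exact (div_le_div_iff_of_pos_right hlog2).mpr h)]
    field_simp
    try ring
  · rw [min_eq_right (by rw [← mul_div_assoc]; exact (div_le_div_iff_of_pos_right hl).mpr h),
      min_eq_right (by rw [← mul_div_assoc]; exact (div_le_div_iff_of_pos_right hlog2).mpr h)]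
    field_simp
    try ring
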